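/- arXiv:1205.1090 — 2 statements merged into one kernel-verified Lean document; each statement's English description precedes it below -/
import Mathlib

section
/- Let P be a poset on [n], E an equivalence relation on I(P) with dual relation E*, 𝔽_q a finite field, and χ a nontrivial additive character of 𝔽_q. Assume that for all order ideals I, J and all v, v' ∈ S_{J̄^c,E*}, Σ_{u ∈ S_{Ī,E}} χ(u·v) = Σ_{u ∈ S_{Ī,E}} χ(u·v'). Let J₁, …, J_m be a complete set of representatives of the E-equivalence classes of I(P), and for each k choose v_k ∈ 𝔽_q^n with ⟨supp(v_k)⟩_{P*} = J_k^c. Then for every linear P-code C ⊆ 𝔽_q^n and every order ideal I: |C^⊥| · A_{Ī,E}(C) = Σ_{k=1}^{m} A_{J̄_k^c,E*}(C^⊥) · (Σ_{u ∈ S_{Ī,E}} χ(u·v_k)). (Theorem 3.3(iii)(b): the MacWilliams-type identity W(C,P,E) = (1/|C^⊥|) W(C^⊥,P*,E*) P_E.) -/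
open scoped BigOperators
open Finset

noncomputable section
open scoped Classical

/-- `I ⊆ [n]` is an order ideal with respect to the order relation `le`. -/
def IsIdeal {n : ℕ} (le : Fin n → Fin n → Prop) (I : Finset (Fin n)) : Prop :=
  ∀ a ∈ I, ∀ b, le b a → b ∈ I

/-- `⟨X⟩_P` : the smallest order ideal (w.r.t. `le`) containing `X`. -/
def idealCl {n : ℕ} (le : Fin n → Fin n → Prop) (X : Finset (Fin n)) : Finset (Fin n) :=
  Finset.univ.filter fun b => ∃ a ∈ X, le b a

/-- `M(A)` : the set of maximal elements of `A` with respect to `le`. -/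
def maxSet {n : ℕ} (le : Fin n → Fin n → Prop) (A : Finset (Fin n)) : Finset (Fin n) :=
  A.filter fun a => ∀ b ∈ A, le a b → b = a

/-- `E` is an equivalence relation on the set of order ideals of the poset `le`. -/
def EqvOnIdeals {n : ℕ} (le : Fin n → Fin n → Prop)
    (E : Finset (Fin n) → Finset (Fin n) → Prop) : Prop :=
  (∀ I J, E I J → IsIdeal le I ∧ IsIdeal le J) ∧
  (∀ I, IsIdeal le I → E I I) ∧
  (∀ I J, E I J → E J I) ∧
  (∀ I J K, E I J → E J K → E I K)

/-- support of a vector -/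
def supp {n : ℕ} {F : Type} [Field F] [Fintype F] (v : Fin n → F) : Finset (Fin n) :=
  Finset.univ.filter fun i => v i ≠ 0

/-- standard dot product -/
def dot {n : ℕ} {F : Type} [Field F] [Fintype F] (u v : Fin n → F) : F := ∑ i, u i * v i

/-- the sphere `S_I = {v : ⟨supp v⟩_P = I}` -/
def sph {n : ℕ} (F : Type) [Field F] [Fintype F] (le : Fin n → Fin n → Prop)
    (I : Finset (Fin n)) : Finset (Fin n → F) :=
  Finset.univ.filter fun v => idealCl le (supp v) = I

/-- the dual sphere `S_{J^c} = {v : ⟨supp v⟩_{P*} = J^c}` -/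
def sphD {n : ℕ} (F : Type) [Field F] [Fintype F] (le : Fin n → Fin n → Prop)
    (J : Finset (Fin n)) : Finset (Fin n → F) :=
  Finset.univ.filter fun v => idealCl (fun a b => le b a) (supp v) = Jᶜ

/-- the `E`-sphere `S_{Ī,E} = {v : (⟨supp v⟩_P, I) ∈ E}` -/
def sphE {n : ℕ} (F : Type) [Field F] [Fintype F] (le : Fin n → Fin n → Prop)
    (E : Finset (Fin n) → Finset (Fin n) → Prop) (I : Finset (Fin n)) :
    Finset (Fin n → F) :=
  Finset.univ.filter fun v => E (idealCl le (supp v)) I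

/-- the `E*`-sphere `S_{J̄^c,E*} = {v : ⟨supp v⟩_{P*} = K^c for some ideal K with (K,J) ∈ E}` -/
def sphED {n : ℕ} (F : Type) [Field F] [Fintype F] (le : Fin n → Fin n → Prop)
    (E : Finset (Fin n) → Finset (Fin n) → Prop) (J : Finset (Fin n)) :
    Finset (Fin n → F) :=
  Finset.univ.filter fun v =>
    ∃ K, IsIdeal le K ∧ E K J ∧ idealCl (fun a b => le b a) (supp v) = Kᶜ

/-- the dual code `C^⊥` -/
def dualCode {n : ℕ} {F : Type} [Field F] [Fintype F] (C : Submodule F (Fin n → F)) :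
    Submodule F (Fin n → F) where
  carrier := {u | ∀ v ∈ C, dot u v = 0}
  zero_mem' := by intro v hv; simp [dot]
  add_mem' := by
    intro a b ha hb v hv
    have h1 := ha v hv
    have h2 := hb v hv
    simp only [dot, Pi.add_apply] at *
    simp [add_mul, Finset.sum_add_distrib, h1, h2]
  smul_mem' := by
    intro c a ha v hv
    have h1 := ha v hv
    simp only [dot, Pi.smul_apply, smul_eq_mul] at *
    simp [mul_assoc, ← Finset.mul_sum, h1]

/-- `A_{Ī,E}(C) = |C ∩ S_{Ī,E}|` -/
def AE {n : ℕ} {F : Type} [Field F] [Fintype F] (le : Fin n → Fin n → Prop)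
    (E : Finset (Fin n) → Finset (Fin n) → Prop)
    (C : Submodule F (Fin n → F)) (I : Finset (Fin n)) : ℕ :=
  ((sphE F le E I).filter fun v => v ∈ C).card

/-- `A_{J̄^c,E*}(D) = |D ∩ S_{J̄^c,E*}|` -/
def AED {n : ℕ} {F : Type} [Field F] [Fintype F] (le : Fin n → Fin n → Prop)
    (E : Finset (Fin n) → Finset (Fin n) → Prop)
    (D : Submodule F (Fin n → F)) (J : Finset (Fin n)) : ℕ :=
  ((sphED F le E J).filter fun v => v ∈ D).card

/-- `E` is a MacWilliams-type equivalence relation (w.r.t. the field `F`). -/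
def IsMacWilliamsType {n : ℕ} (F : Type) [Field F] [Fintype F]
    (le : Fin n → Fin n → Prop) (E : Finset (Fin n) → Finset (Fin n) → Prop) : Prop :=
  ∀ C₁ C₂ : Submodule F (Fin n → F),
    (∀ I, IsIdeal le I → AE le E C₁ I = AE le E C₂ I) →
    ∀ J, IsIdeal le J → AED le E (dualCode C₁) J = AED le E (dualCode C₂) J

/-- a hierarchical poset (ordinal sum of antichains) -/
def IsHierarchical {n : ℕ} (le : Fin n → Fin n → Prop) : Prop :=
  ∃ l : Fin n → ℕ, ∀ i j, (le i j ∧ i ≠ j) ↔ l i < l j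

/-- `σ` is an automorphism of the poset `le`. -/
def IsAut {n : ℕ} (le : Fin n → Fin n → Prop) (σ : Equiv.Perm (Fin n)) : Prop :=
  ∀ x y, le x y ↔ le (σ x) (σ y)

/-- `A` and `B` are order-isomorphic with the induced orders. -/
def OrdIso {n : ℕ} (le : Fin n → Fin n → Prop) (A B : Finset (Fin n)) : Prop :=
  ∃ e : {x // x ∈ A} ≃ {x // x ∈ B}, ∀ a b : {x // x ∈ A}, le ↑a ↑b ↔ le ↑(e a) ↑(e b)


/-! ### Auxiliary lemmas -/

lemma dot_comm {n : ℕ} {F : Type} [Field F] [Fintype F] (u v : Fin n → F) :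
    dot u v = dot v u := by
  simp [dot, mul_comm]

/-- The dot product as a bilinear form. -/
def dotBilin (n : ℕ) (F : Type) [Field F] [Fintype F] :
    LinearMap.BilinForm F (Fin n → F) :=
  LinearMap.mk₂ F (fun u v => dot u v)
    (by intro x y z; simp [dot, add_mul, Finset.sum_add_distrib])
    (by intro c x y; simp [dot, Finset.mul_sum, mul_assoc])
    (by intro x y z; simp [dot, mul_add, Finset.sum_add_distrib])
    (by intro c x y; simp [dot, Finset.mul_sum, mul_assoc, mul_left_comm])

lemma dotBilin_apply {n : ℕ} {F : Type} [Field F] [Fintype F] (u v : Fin n → F) :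
    dotBilin n F u v = dot u v := rfl

lemma dotBilin_nondeg (n : ℕ) (F : Type) [Field F] [Fintype F] :
    (dotBilin n F).Nondegenerate := by
  refine ⟨fun u hu => ?_, fun u hu => ?_⟩
  all_goals
  funext i
  have := hu (Pi.single i 1)
  simp only [dotBilin_apply, dot] at this
  rw [Finset.sum_eq_single i] at this
  · simpa using this
  · intro b _ hb; simp [Pi.single_apply, hb]
  · intro h; exact absurd (Finset.mem_univ i) h

lemma dotBilin_refl (n : ℕ) (F : Type) [Field F] [Fintype F] :
    (dotBilin n F).IsRefl := by
  intro u v h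
  rwa [dotBilin_apply, dot_comm, ← dotBilin_apply]

lemma dualCode_eq_orthogonal {n : ℕ} {F : Type} [Field F] [Fintype F]
    (C : Submodule F (Fin n → F)) :
    dualCode C = (dotBilin n F).orthogonal C := by
  ext u
  constructor
  · intro hu w hw
    have := hu w hw
    rw [dotBilin_apply, dot_comm]
    exact this
  · intro hu w hw
    have := hu w hw
    rw [dotBilin_apply] at this
    rw [dot_comm]; exact this

/-- double dual: if `u ∉ C` then some `v ∈ C^⊥` has `dot u v ≠ 0`. -/
lemma exists_dual_nonzero {n : ℕ} {F : Type} [Field F] [Fintype F]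
    (C : Submodule F (Fin n → F)) {u : Fin n → F} (hu : u ∉ C) :
    ∃ v ∈ dualCode C, dot u v ≠ 0 := by
  have hdd := LinearMap.BilinForm.orthogonal_orthogonal (dotBilin_nondeg n F)
    (dotBilin_refl n F) C
  rw [← hdd] at hu
  rw [LinearMap.BilinForm.mem_orthogonal_iff] at hu
  push_neg at hu
  obtain ⟨v, hv, hne⟩ := hu
  rw [dualCode_eq_orthogonal]
  refine ⟨v, hv, ?_⟩
  rw [dot_comm]
  exact hne

/-- the character sum over the dual code. -/
lemma char_sum_dual {n : ℕ} {F : Type} [Field F] [Fintype F]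
    (χ : AddChar F ℂ) (hχ : ∃ a, χ a ≠ 1)
    (C : Submodule F (Fin n → F)) (u : Fin n → F) :
    ∑ v ∈ Finset.univ.filter (fun v => v ∈ dualCode C), χ (dot u v) =
      if u ∈ C then ((Finset.univ.filter fun v => v ∈ dualCode C).card : ℂ) else 0 := by
  by_cases hu : u ∈ C
  · rw [if_pos hu]
    rw [Finset.sum_congr rfl (fun v hv => ?_), Finset.sum_const, nsmul_eq_mul, mul_one]
    have hv' : v ∈ dualCode C := (Finset.mem_filter.mp hv).2
    have : dot v u = 0 := hv' u hu
    rw [dot_comm] at this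
    rw [this, AddChar.map_zero_eq_one]
  · rw [if_neg hu]
    obtain ⟨v₀, hv₀, ht⟩ := exists_dual_nonzero C hu
    -- the additive character on the dual code given by `v ↦ χ (dot u v)`
    set D := dualCode C
    have hhom : ∀ a b : D, dot u ((a : Fin n → F) + b) = dot u a + dot u b := by
      intro a b
      simp [dot, mul_add, Finset.sum_add_distrib]
    let f : D →+ F := AddMonoidHom.mk' (fun v : D => dot u (v : Fin n → F)) hhom
    let ψ : AddChar D ℂ := χ.compAddMonoidHom f
    have hψ : ψ ≠ 1 := by
      obtain ⟨a, ha⟩ := hχ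
      rw [AddChar.ne_one_iff]
      refine ⟨⟨(a * (dot u v₀)⁻¹) • v₀, D.smul_mem _ hv₀⟩, ?_⟩
      show χ (dot u ((a * (dot u v₀)⁻¹) • v₀)) ≠ 1
      have hsm : dot u ((a * (dot u v₀)⁻¹) • v₀) = a * (dot u v₀)⁻¹ * dot u v₀ := by
        simp only [dot, Pi.smul_apply, smul_eq_mul, Finset.mul_sum]
        exact Finset.sum_congr rfl fun i _ => by ring
      rw [hsm, mul_assoc, inv_mul_cancel₀ ht, mul_one]
      exact ha
    have hsum : ∑ x : D, ψ x = 0 := AddChar.sum_eq_zero_of_ne_one hψ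
    calc ∑ v ∈ Finset.univ.filter (fun v => v ∈ D), χ (dot u v)
        = ∑ x : D, χ (dot u (x : Fin n → F)) := by
          rw [Finset.sum_subtype (Finset.univ.filter (fun v => v ∈ D))
            (p := fun v => v ∈ D) (fun x => by simp)]
      _ = ∑ x : D, ψ x := rfl
      _ = 0 := hsum

/-- the closure w.r.t. the dual order is an "up-set", so its complement is an ideal. -/
lemma compl_idealCl_isIdeal {n : ℕ} (le : Fin n → Fin n → Prop)
    [IsPartialOrder (Fin n) le] (X : Finset (Fin n)) :
    IsIdeal le (idealCl (fun a b => le b a) X)ᶜ := by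
  intro a ha b hba
  rw [Finset.mem_compl] at ha ⊢
  intro hb
  apply ha
  rw [idealCl, Finset.mem_filter] at hb ⊢
  obtain ⟨-, c, hc, hcb⟩ := hb
  exact ⟨Finset.mem_univ a, c, hc, IsTrans.trans c b a hcb hba⟩

/-- Theorem 3.3(iii)(b): the MacWilliams-type identity
`W(C,P,E) = (1/|C^⊥|) W(C^⊥,P*,E*) P_E`. -/
theorem stmt_7 {n : ℕ} (hn : 0 < n) (le : Fin n → Fin n → Prop)
    [IsPartialOrder (Fin n) le]
    (E : Finset (Fin n) → Finset (Fin n) → Prop) (hE : EqvOnIdeals le E)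
    (F : Type) [Field F] [Fintype F] (χ : AddChar F ℂ) (hχ : ∃ a, χ a ≠ 1)
    (hb : ∀ I J : Finset (Fin n), IsIdeal le I → IsIdeal le J →
      ∀ v ∈ sphED F le E J, ∀ v' ∈ sphED F le E J,
        ∑ u ∈ sphE F le E I, χ (dot u v) = ∑ u ∈ sphE F le E I, χ (dot u v'))
    (m : ℕ) (Jrep : Fin m → Finset (Fin n)) (hJrep : ∀ k, IsIdeal le (Jrep k))
    (hcomplete : ∀ J : Finset (Fin n), IsIdeal le J → ∃! k : Fin m, E J (Jrep k))
    (vrep : Fin m → (Fin n → F))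
    (hvrep : ∀ k, idealCl (fun a b => le b a) (supp (vrep k)) = (Jrep k)ᶜ)
    (C : Submodule F (Fin n → F)) (I : Finset (Fin n)) (hI : IsIdeal le I) :
    (((Finset.univ.filter fun u => u ∈ dualCode C).card : ℂ)) * (AE le E C I : ℂ) =
      ∑ k : Fin m, (AED le E (dualCode C) (Jrep k) : ℂ) *
        ∑ u ∈ sphE F le E I, χ (dot u (vrep k)) := by
  classical
  set Dfin := Finset.univ.filter (fun v => v ∈ dualCode C) with hDfin
  have hKideal : ∀ v : Fin n → F,
      IsIdeal le ((idealCl (fun a b => le b a) (supp v))ᶜ) :=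
    fun v => compl_idealCl_isIdeal le (supp v)
  have hmemED : ∀ (v : Fin n → F) (J : Finset (Fin n)),
      v ∈ sphED F le E J ↔ E ((idealCl (fun a b => le b a) (supp v))ᶜ) J := by
    intro v J
    simp only [sphED, Finset.mem_filter, Finset.mem_univ, true_and]
    constructor
    · rintro ⟨K, hKi, hKE, hKc⟩
      have hK : K = (idealCl (fun a b => le b a) (supp v))ᶜ := by
        rw [← compl_compl K, hKc]
      rwa [← hK]
    · intro h
      exact ⟨_, hKideal v, h, (compl_compl _).symm⟩
  have hkey : ∀ v : Fin n → F, ∃! k : Fin m,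
      E ((idealCl (fun a b => le b a) (supp v))ᶜ) (Jrep k) :=
    fun v => hcomplete _ (hKideal v)
  set key : (Fin n → F) → Fin m := fun v => (hkey v).choose with hkeydef
  have hmem_iff : ∀ v k, v ∈ sphED F le E (Jrep k) ↔ key v = k := by
    intro v k
    rw [hmemED]
    constructor
    · exact fun h => ((hkey v).choose_spec.2 k h).symm
    · rintro rfl
      exact (hkey v).choose_spec.1
  have hvrepmem : ∀ k, vrep k ∈ sphED F le E (Jrep k) := by
    intro k
    simp only [sphED, Finset.mem_filter, Finset.mem_univ, true_and]
    exact ⟨Jrep k, hJrep k, hE.2.1 _ (hJrep k), hvrep k⟩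
  calc ((Dfin.card : ℂ)) * (AE le E C I : ℂ)
      = ∑ u ∈ (sphE F le E I).filter (fun u => u ∈ C), (Dfin.card : ℂ) := by
        rw [Finset.sum_const, nsmul_eq_mul, AE]; ring
    _ = ∑ u ∈ sphE F le E I, (if u ∈ C then (Dfin.card : ℂ) else 0) := by
        rw [Finset.sum_filter]
    _ = ∑ u ∈ sphE F le E I, ∑ v ∈ Dfin, χ (dot u v) := by
        refine Finset.sum_congr rfl fun u _ => ?_
        rw [← char_sum_dual χ hχ C u]
    _ = ∑ v ∈ Dfin, ∑ u ∈ sphE F le E I, χ (dot u v) := by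
        rw [Finset.sum_comm]
    _ = ∑ k : Fin m, ∑ v ∈ Dfin.filter (fun v => key v = k),
          ∑ u ∈ sphE F le E I, χ (dot u v) := by
        rw [Finset.sum_fiberwise]
    _ = ∑ k : Fin m, (AED le E (dualCode C) (Jrep k) : ℂ) *
          ∑ u ∈ sphE F le E I, χ (dot u (vrep k)) := by
        refine Finset.sum_congr rfl fun k _ => ?_
        have hfilter : Dfin.filter (fun v => key v = k) =
            (sphED F le E (Jrep k)).filter (fun v => v ∈ dualCode C) := by
          ext v
          simp only [Finset.mem_filter, hDfin, Finset.mem_univ, true_and,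
            ← hmem_iff v k]
          tauto
        rw [hfilter,
          Finset.sum_congr rfl (fun v hv => hb I (Jrep k) hI (hJrep k) v
            (Finset.mem_filter.mp hv).1 (vrep k) (hvrepmem k)),
          Finset.sum_const, nsmul_eq_mul, AED]

end
end

section
/- Let P be a poset on [n], 𝔽_q a finite field, and H a subgroup of the automorphism group Aut(P). Then the equivalence relation E_H on I(P), defined by (I,J) ∈ E_H iff σ(I) = J for some σ ∈ H, is a MacWilliams-type equivalence relation: for all linear P-codes C₁, C₂ ⊆ 𝔽_q^n, if A_{Ī,E_H}(C₁) = A_{Ī,E_H}(C₂) for all order ideals I, then A_{J̄^c,E_H*}(C₁^⊥) = A_{J̄^c,E_H*}(C₂^⊥) for all order ideals J. (Theorem 4.1(i).) -/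
open scoped BigOperators
open Finset

noncomputable section
open scoped Classical

/-! ### Auxiliary lemmas -/

section Aux

lemma toDual_pi {F : Type} [Field F] [Fintype F] {ι : Type} [Fintype ι] [DecidableEq ι]
    (u w : ι → F) :
    (Pi.basisFun F ι).toDual u w = ∑ i, u i * w i := by
  have hw : w = ∑ i, w i • (Pi.basisFun F ι) i := by
    funext j
    rw [Finset.sum_apply]
    simp [Pi.basisFun_apply, Pi.single_apply]
  conv_lhs => rw [hw]
  rw [map_sum]
  refine (Finset.sum_congr rfl fun i _ => ?_)
  rw [map_smul, Module.Basis.toDual_apply_left]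
  simp [Pi.basisFun_repr, mul_comm]

lemma card_filter_eq_nat_card {α : Type} [Fintype α] (p : α → Prop) [DecidablePred p] :
    (univ.filter p).card = Nat.card {x // p x} := by
  classical
  rw [Nat.card_eq_fintype_card, Fintype.card_subtype]

lemma supp_subset_iff_zero {n : ℕ} {F : Type} [Field F] [Fintype F] (v : Fin n → F)
    (T : Finset (Fin n)) : supp v ⊆ T ↔ ∀ i ∈ Tᶜ, v i = 0 := by
  constructor
  · intro h i hi
    by_contra hv
    exact (Finset.mem_compl.mp hi) (h (by simp [supp, hv]))
  · intro h i hi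
    simp only [supp, mem_filter] at hi
    by_contra hT
    exact hi.2 (h i (Finset.mem_compl.mpr hT))

/-- The key duality counting identity. -/
lemma key_card {n : ℕ} {F : Type} [Field F] [Fintype F] (C : Submodule F (Fin n → F))
    (T : Finset (Fin n)) :
    (univ.filter fun v : Fin n → F => v ∈ dualCode C ∧ supp v ⊆ Tᶜ).card * Nat.card C
    = (Fintype.card F) ^ (Tᶜ.card) *
      (univ.filter fun v : Fin n → F => v ∈ C ∧ supp v ⊆ T).card := by
  set ι := {i : Fin n // i ∈ Tᶜ}
  let r : (Fin n → F) →ₗ[F] (ι → F) := LinearMap.funLeft F F (fun i : ι => (i : Fin n))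
  let f : C →ₗ[F] (ι → F) := r ∘ₗ C.subtype
  set W := LinearMap.range f with hW
  have hA : Nat.card C = Nat.card (LinearMap.ker f) * Nat.card W := by
    rw [Submodule.card_eq_card_quotient_mul_card (LinearMap.ker f), mul_comm]
    rw [Nat.card_congr f.quotKerEquivRange.toEquiv, mul_comm]
  have hker : ∀ (x : C), (f x = 0 ↔ supp (x : Fin n → F) ⊆ T) := by
    intro x
    rw [supp_subset_iff_zero]
    constructor
    · intro h i hi
      exact congrFun h ⟨i, hi⟩
    · intro h
      funext i
      exact h i i.2
  have hB : Nat.card (LinearMap.ker f)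
      = (univ.filter fun v : Fin n → F => v ∈ C ∧ supp v ⊆ T).card := by
    rw [card_filter_eq_nat_card]
    refine Nat.card_congr ?_
    refine { toFun := fun x => ⟨x.1.1, x.1.2, (hker x.1).1 x.2⟩,
             invFun := fun v => ⟨⟨v.1, v.2.1⟩, (hker ⟨v.1, v.2.1⟩).2 v.2.2⟩,
             left_inv := fun x => by ext; rfl,
             right_inv := fun v => by ext; rfl }
  let ψ : (ι → F) →ₗ[F] Module.Dual F W :=
    W.dualRestrict ∘ₗ ((Pi.basisFun F ι).toDualEquiv.toLinearMap)
  have hψapp : ∀ (u : ι → F) (w : W), ψ u w = ∑ i, u i * (w : ι → F) i := by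
    intro u w
    show W.dualRestrict ((Pi.basisFun F ι).toDual u) w = _
    rw [Submodule.dualRestrict_apply, toDual_pi]
  have surjψ : Function.Surjective ψ := by
    have : ⇑ψ = ⇑W.dualRestrict ∘ ⇑(Pi.basisFun F ι).toDualEquiv := rfl
    rw [this]
    exact (Subspace.dualRestrict_surjective (W := W)).comp
      (Pi.basisFun F ι).toDualEquiv.surjective
  have hC1 : Nat.card (ι → F) = Nat.card (LinearMap.ker ψ) * Nat.card (Module.Dual F W) := by
    rw [Submodule.card_eq_card_quotient_mul_card (LinearMap.ker ψ)]
    rw [Nat.card_congr (LinearMap.quotKerEquivOfSurjective ψ surjψ).toEquiv]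
  have hC2 : Nat.card (Module.Dual F W) = Nat.card W :=
    Nat.card_congr (Module.finBasis F W).toDualEquiv.symm.toEquiv
  have hkerψ : ∀ u : ι → F, u ∈ LinearMap.ker ψ ↔ ∀ w ∈ W, ∑ i, u i * w i = 0 := by
    intro u
    rw [LinearMap.mem_ker]
    constructor
    · intro h w hw
      have := congrArg (fun φ : Module.Dual F W => φ ⟨w, hw⟩) h
      simpa [hψapp] using this
    · intro h
      apply LinearMap.ext
      intro w
      simp [hψapp, h w.1 w.2]
  have sum_ext : ∀ (v : Fin n → F) (c : Fin n → F), supp v ⊆ Tᶜ →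
      (∑ i : ι, v i * c i) = dot v c := by
    intro v c hv
    rw [dot, Finset.sum_coe_sort Tᶜ (fun i => v i * c i)]
    refine Finset.sum_subset (Finset.subset_univ Tᶜ) ?_
    intro i _ hi
    rw [(supp_subset_iff_zero v Tᶜ).mp hv i (by simpa using hi), zero_mul]
  have hD : (univ.filter fun v : Fin n → F => v ∈ dualCode C ∧ supp v ⊆ Tᶜ).card
      = Nat.card (LinearMap.ker ψ) := by
    rw [card_filter_eq_nat_card]
    refine Nat.card_congr ?_
    refine { toFun := fun x => ⟨r x.1, ?_⟩,
             invFun := fun u => ⟨fun i => if h : i ∈ Tᶜ then u.1 ⟨i, h⟩ else 0, ?_, ?_⟩,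
             left_inv := ?_, right_inv := ?_ }
    · rw [hkerψ]
      rintro w ⟨c, rfl⟩
      have : ∑ i : ι, (r x.1) i * (f c) i = dot x.1 c := by
        exact sum_ext x.1 c x.2.2
      rw [this]
      exact x.2.1 c c.2
    · show ∀ c ∈ C, dot _ c = 0
      intro c hc
      have hsupp : supp (fun i => if h : i ∈ Tᶜ then u.1 ⟨i, h⟩ else 0) ⊆ Tᶜ := by
        intro i hi
        simp only [supp, mem_filter] at hi
        by_contra hiT
        exact hi.2 (by rw [dif_neg hiT])
      rw [← sum_ext _ c hsupp]
      have hu := (hkerψ u.1).mp u.2 (f ⟨c, hc⟩) (LinearMap.mem_range_self f ⟨c, hc⟩)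
      rw [← hu]
      refine Finset.sum_congr rfl fun i _ => ?_
      rw [dif_pos i.2]
      rfl
    · intro i hi
      simp only [supp, mem_filter] at hi
      by_contra hiT
      exact hi.2 (by rw [dif_neg hiT])
    · intro x
      apply Subtype.ext
      funext i
      dsimp only
      by_cases h : i ∈ Tᶜ
      · simp only [dif_pos h]
        rfl
      · rw [dif_neg h]
        exact ((supp_subset_iff_zero x.1 Tᶜ).mp x.2.2 i (by simpa using h)).symm
    · intro u
      apply Subtype.ext
      funext i
      dsimp only
      exact dif_pos i.2
  have hcardfun : Nat.card (ι → F) = (Fintype.card F) ^ (Tᶜ.card) := by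
    rw [Nat.card_eq_fintype_card, Fintype.card_fun, Fintype.card_coe]
  rw [hD, hA, hB]
  calc Nat.card (LinearMap.ker ψ) *
        ((univ.filter fun v : Fin n → F => v ∈ C ∧ supp v ⊆ T).card * Nat.card W)
      = (Nat.card (LinearMap.ker ψ) * Nat.card W) *
        (univ.filter fun v : Fin n → F => v ∈ C ∧ supp v ⊆ T).card := by ring
    _ = _ := by rw [← hC2, ← hC1, hcardfun]

/-- Partitioning a count according to the value of a fiber map. -/
lemma count_partition {α β : Type} [Fintype α] [Fintype β]
    (p : α → Prop) (f : α → β) (P : β → Prop)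
    {instL : DecidablePred fun v => P (f v) ∧ p v}
    {instP : DecidablePred P}
    {instI : ∀ L, DecidablePred fun v => f v = L ∧ p v} :
    (@Finset.filter _ (fun v => P (f v) ∧ p v) instL univ).card
      = ∑ L ∈ @Finset.filter _ P instP univ,
          (@Finset.filter _ (fun v => f v = L ∧ p v) (instI L) univ).card := by
  classical
  rw [Finset.card_eq_sum_card_fiberwise
    (f := f) (t := univ.filter P) (fun v hv => by
      simp only [Finset.coe_filter, Set.mem_setOf_eq, Finset.mem_coe, Finset.mem_filter] at hv ⊢
      exact ⟨Finset.mem_univ _, hv.2.1⟩)]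
  refine Finset.sum_congr rfl fun L hL => ?_
  congr 1
  ext v
  simp only [Finset.mem_filter, Finset.mem_univ, true_and] at hL ⊢
  constructor
  · rintro ⟨⟨_, hp⟩, hf⟩
    exact ⟨hf, hp⟩
  · rintro ⟨hf, hp⟩
    exact ⟨⟨hf ▸ hL, hp⟩, hf⟩

/-- order-theoretic helpers -/
lemma subset_idealCl {n : ℕ} {le : Fin n → Fin n → Prop} (hrefl : ∀ a, le a a)
    (X : Finset (Fin n)) : X ⊆ idealCl le X := fun a ha =>
  Finset.mem_filter.mpr ⟨Finset.mem_univ _, a, ha, hrefl a⟩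

lemma isIdeal_idealCl {n : ℕ} {le : Fin n → Fin n → Prop}
    (htrans : ∀ a b c, le a b → le b c → le a c) (X : Finset (Fin n)) :
    IsIdeal le (idealCl le X) := by
  intro a ha b hba
  obtain ⟨-, c, hc, hac⟩ := Finset.mem_filter.mp ha
  exact Finset.mem_filter.mpr ⟨Finset.mem_univ _, c, hc, htrans b a c hba hac⟩

lemma idealCl_subset {n : ℕ} {le : Fin n → Fin n → Prop} {I X : Finset (Fin n)}
    (hI : IsIdeal le I) (hX : X ⊆ I) : idealCl le X ⊆ I := by
  intro b hb
  obtain ⟨-, a, ha, hba⟩ := Finset.mem_filter.mp hb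
  exact hI a (hX ha) b hba

lemma isIdeal_compl {n : ℕ} {le : Fin n → Fin n → Prop} {D : Finset (Fin n)}
    (hD : IsIdeal le D) : IsIdeal (fun a b => le b a) Dᶜ := by
  intro a ha b hab
  rw [Finset.mem_compl] at ha ⊢
  exact fun hb => ha (hD b hb a hab)

lemma compl_flip {n : ℕ} {X K : Finset (Fin n)} (h : X ⊆ Kᶜ) : K ⊆ Xᶜ := by
  intro i hi
  rw [Finset.mem_compl]
  intro hX
  exact Finset.mem_compl.mp (h hX) hi

lemma isAut_inv {n : ℕ} {le : Fin n → Fin n → Prop} {σ : Equiv.Perm (Fin n)}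
    (hσ : IsAut le σ) : IsAut le σ⁻¹ := by
  intro x y
  have := hσ (σ⁻¹ x) (σ⁻¹ y)
  simpa using this.symm

lemma isIdeal_image {n : ℕ} {le : Fin n → Fin n → Prop} {σ : Equiv.Perm (Fin n)}
    (hσ : IsAut le σ) {I : Finset (Fin n)} (hI : IsIdeal le I) :
    IsIdeal le (I.image σ) := by
  intro a ha b hba
  obtain ⟨a', ha', rfl⟩ := Finset.mem_image.mp ha
  have hb : le (σ (σ⁻¹ b)) (σ a') := by simpa using hba
  have : σ⁻¹ b ∈ I := hI a' ha' _ ((hσ (σ⁻¹ b) a').mpr hb)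
  exact Finset.mem_image.mpr ⟨σ⁻¹ b, this, by simp⟩

lemma image_image_inv {n : ℕ} (τ : Equiv.Perm (Fin n)) (K : Finset (Fin n)) :
    (K.image τ).image ↑τ⁻¹ = K := by
  rw [Finset.image_image]
  have : (⇑τ⁻¹ ∘ ⇑τ) = id := by
    funext x
    simp
  rw [this, Finset.image_id]

/-- plain sphere count -/
def gA {n : ℕ} (le : Fin n → Fin n → Prop) {F : Type} [Field F] [Fintype F]
    (C : Submodule F (Fin n → F)) (L : Finset (Fin n)) : ℕ :=
  (univ.filter fun v : Fin n → F => idealCl le (supp v) = L ∧ v ∈ C).card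

/-- dual sphere count -/
def gB {n : ℕ} (le : Fin n → Fin n → Prop) {F : Type} [Field F] [Fintype F]
    (D : Submodule F (Fin n → F)) (L : Finset (Fin n)) : ℕ :=
  (univ.filter fun v : Fin n → F =>
    (idealCl (fun a b => le b a) (supp v))ᶜ = L ∧ v ∈ D).card

/-- swapping a double sum into coefficient form -/
lemma swap_count {γ : Type} [Fintype γ] (t : Finset γ) (g : γ → ℕ) (Q : γ → γ → Prop)
    {instA : ∀ K, DecidablePred fun M => Q M K}
    {instB : ∀ M, DecidablePred fun K => Q M K} :
    ∑ K ∈ t, ∑ M ∈ @Finset.filter _ (fun M => Q M K) (instA K) univ, g M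
      = ∑ M ∈ univ, (@Finset.filter _ (fun K => Q M K) (instB M) t).card * g M := by
  classical
  calc ∑ K ∈ t, ∑ M ∈ @Finset.filter _ (fun M => Q M K) (instA K) univ, g M
      = ∑ K ∈ t, ∑ M ∈ univ, if Q M K then g M else 0 := by
        refine Finset.sum_congr rfl fun K _ => ?_
        rw [Finset.filter_congr_decidable, Finset.sum_filter]
    _ = ∑ M ∈ univ, ∑ K ∈ t, if Q M K then g M else 0 := Finset.sum_comm
    _ = ∑ M ∈ univ, (@Finset.filter _ (fun K => Q M K) (instB M) t).card * g M := by
        refine Finset.sum_congr rfl fun M _ => ?_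
        rw [Finset.filter_congr_decidable, ← Finset.sum_filter, Finset.sum_const, smul_eq_mul]

/-- first coefficient: number of `K` with `(K,J') ∈ E` and `M ⊆ K` -/
def coefD {n : ℕ} (E : Finset (Fin n) → Finset (Fin n) → Prop) (J' M : Finset (Fin n)) : ℕ :=
  ((univ.filter (fun K => E K J')).filter (fun K => M ⊆ K)).card

/-- second coefficient: number of `K` with `(K,J') ∈ E` and `K ⊆ L` -/
def coefC {n : ℕ} (E : Finset (Fin n) → Finset (Fin n) → Prop) (J' L : Finset (Fin n)) : ℕ :=
  ((univ.filter (fun K => E K J')).filter (fun K => K ⊆ L)).card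

end Aux


/-- Theorem 4.1(i): for every subgroup `H` of `Aut(P)`, the relation `E_H` is of
MacWilliams type. -/
theorem stmt_13 {n : ℕ} (hn : 0 < n) (le : Fin n → Fin n → Prop)
    [IsPartialOrder (Fin n) le]
    (F : Type) [Field F] [Fintype F]
    (H : Subgroup (Equiv.Perm (Fin n))) (hH : ∀ σ ∈ H, IsAut le σ) :
    IsMacWilliamsType F le (fun A B => ∃ σ ∈ H, A.image σ = B) := by
  intro C₁ C₂ hband J hJ
  obtain ⟨E, hEdef⟩ : ∃ E' : Finset (Fin n) → Finset (Fin n) → Prop,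
      E' = fun A B => ∃ σ ∈ H, A.image σ = B := ⟨_, rfl⟩
  rw [← hEdef] at hband ⊢
  have hrefl : ∀ a : Fin n, le a a := fun a => refl_of le a
  have htrans : ∀ a b c : Fin n, le a b → le b c → le a c :=
    fun a b c h1 h2 => _root_.trans_of le h1 h2
  -- basic facts about the relation E
  have Erefl : ∀ A, E A A := by
    intro A
    rw [hEdef]
    exact ⟨1, H.one_mem, by simp⟩
  have Esymm : ∀ {A B}, E A B → E B A := by
    intro A B h
    rw [hEdef] at h ⊢
    obtain ⟨σ, hσ, rfl⟩ := h
    exact ⟨σ⁻¹, H.inv_mem hσ, image_image_inv σ A⟩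
  have Etrans : ∀ {A B C}, E A B → E B C → E A C := by
    intro A B C h1 h2
    rw [hEdef] at h1 h2 ⊢
    obtain ⟨σ, hσ, rfl⟩ := h1
    obtain ⟨τ, hτ, rfl⟩ := h2
    refine ⟨τ * σ, H.mul_mem hτ hσ, ?_⟩
    rw [Finset.image_image]
    rfl
  have Ecard : ∀ {A B}, E A B → A.card = B.card := by
    intro A B h
    rw [hEdef] at h
    obtain ⟨σ, hσ, rfl⟩ := h
    exact (Finset.card_image_of_injective _ σ.injective).symm
  have Eideal : ∀ {K J' : Finset (Fin n)}, E K J' → IsIdeal le J' → IsIdeal le K := by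
    intro K J' h hI
    rw [hEdef] at h
    obtain ⟨σ, hσ, rfl⟩ := h
    have := isIdeal_image (isAut_inv (hH σ hσ)) hI
    rwa [image_image_inv] at this
  have Eact : ∀ {K J' : Finset (Fin n)} (τ : Equiv.Perm (Fin n)), τ ∈ H → E K J' →
      E (K.image τ) J' := by
    intro K J' τ hτ h
    rw [hEdef] at h ⊢
    obtain ⟨σ, hσ, rfl⟩ := h
    refine ⟨σ * τ⁻¹, H.mul_mem hσ (H.inv_mem hτ), ?_⟩
    rw [Finset.image_image]
    refine Finset.image_congr ?_ |>.trans rfl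
    intro x _
    simp
  -- nonzero sphere counts force ideals
  have hgAI : ∀ (C : Submodule F (Fin n → F)) L, gA le C L ≠ 0 → IsIdeal le L := by
    intro C L h
    obtain ⟨v, hv⟩ := Finset.card_pos.mp (Nat.pos_of_ne_zero h)
    obtain ⟨-, hcl, -⟩ := Finset.mem_filter.mp hv
    rw [← hcl]
    exact isIdeal_idealCl htrans _
  have hgBI : ∀ (D : Submodule F (Fin n → F)) L, gB le D L ≠ 0 → IsIdeal le L := by
    intro D L h
    obtain ⟨v, hv⟩ := Finset.card_pos.mp (Nat.pos_of_ne_zero h)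
    obtain ⟨-, hcl, -⟩ := Finset.mem_filter.mp hv
    rw [← hcl]
    have : IsIdeal (fun a b => le b a) (idealCl (fun a b => le b a) (supp v)) :=
      isIdeal_idealCl (fun a b c h1 h2 => htrans c b a h2 h1) _
    exact isIdeal_compl this
  -- conversion of the `A`-numbers into sums of sphere counts
  have hAEeq : ∀ (C : Submodule F (Fin n → F)) (I : Finset (Fin n)),
      AE le E C I = ∑ L ∈ univ.filter (fun L => E L I), gA le C L := by
    intro C I
    show ((sphE F le E I).filter fun v => v ∈ C).card = _
    unfold sphE
    rw [Finset.filter_filter]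
    exact count_partition (fun v => v ∈ C) (fun v => idealCl le (supp v)) (fun L => E L I)
  have hAEDeq : ∀ (D : Submodule F (Fin n → F)) (J' : Finset (Fin n)),
      AED le E D J' = ∑ L ∈ univ.filter (fun L => E L J'), gB le D L := by
    intro D J'
    show ((sphED F le E J').filter fun v => v ∈ D).card = _
    have h1 : sphED F le E J'
        = univ.filter fun v : Fin n → F =>
            E ((idealCl (fun a b => le b a) (supp v))ᶜ) J' := by
      ext v
      simp only [sphED, Finset.mem_filter, Finset.mem_univ, true_and]
      constructor
      · rintro ⟨K, hK, hKE, hX⟩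
        rw [hX, compl_compl]
        exact hKE
      · intro h
        refine ⟨(idealCl (fun a b => le b a) (supp v))ᶜ, ?_, h, (compl_compl _).symm⟩
        exact isIdeal_compl (isIdeal_idealCl (fun a b c h1 h2 => htrans c b a h2 h1) _)
    rw [h1, Finset.filter_filter]
    exact count_partition (fun v => v ∈ D)
      (fun v => (idealCl (fun a b => le b a) (supp v))ᶜ) (fun L => E L J')
  -- counts of codewords with support contained in an ideal / coideal
  have hNC : ∀ (C : Submodule F (Fin n → F)) (K : Finset (Fin n)), IsIdeal le K →
      (univ.filter fun v : Fin n → F => v ∈ C ∧ supp v ⊆ K).card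
        = ∑ M ∈ univ.filter (fun M => M ⊆ K), gA le C M := by
    intro C K hK
    have h1 : (univ.filter fun v : Fin n → F => v ∈ C ∧ supp v ⊆ K)
        = univ.filter fun v : Fin n → F => idealCl le (supp v) ⊆ K ∧ v ∈ C := by
      ext v
      simp only [Finset.mem_filter, Finset.mem_univ, true_and]
      constructor
      · rintro ⟨h1, h2⟩
        exact ⟨idealCl_subset hK h2, h1⟩
      · rintro ⟨h1, h2⟩
        exact ⟨h2, (subset_idealCl hrefl _).trans h1⟩
    rw [h1]
    exact count_partition (fun v => v ∈ C) (fun v => idealCl le (supp v)) (fun M => M ⊆ K)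
  have hND : ∀ (D : Submodule F (Fin n → F)) (K : Finset (Fin n)), IsIdeal le K →
      (univ.filter fun v : Fin n → F => v ∈ D ∧ supp v ⊆ Kᶜ).card
        = ∑ L ∈ univ.filter (fun L => K ⊆ L), gB le D L := by
    intro D K hK
    have hKc : IsIdeal (fun a b => le b a) Kᶜ := isIdeal_compl hK
    have h1 : (univ.filter fun v : Fin n → F => v ∈ D ∧ supp v ⊆ Kᶜ)
        = univ.filter fun v : Fin n → F =>
            K ⊆ (idealCl (fun a b => le b a) (supp v))ᶜ ∧ v ∈ D := by
      ext v
      simp only [Finset.mem_filter, Finset.mem_univ, true_and]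
      constructor
      · rintro ⟨h1, h2⟩
        exact ⟨compl_flip (idealCl_subset hKc h2), h1⟩
      · rintro ⟨h1, h2⟩
        exact ⟨h2, (subset_idealCl (le := fun a b => le b a) (fun a => hrefl a) _).trans
          (compl_flip h1)⟩
    rw [h1]
    exact count_partition (fun v => v ∈ D)
      (fun v => (idealCl (fun a b => le b a) (supp v))ᶜ) (fun L => K ⊆ L)
  -- total count of a code
  have hPlain : ∀ (C : Submodule F (Fin n → F)),
      Nat.card C = ∑ L ∈ univ, gA le C L := by
    intro C
    have h0 : Nat.card C = (univ.filter fun v : Fin n → F => v ∈ C ∧ supp v ⊆ univ).card := by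
      rw [card_filter_eq_nat_card]
      refine Nat.card_congr (Equiv.subtypeEquivRight ?_).symm
      intro v
      simp [Finset.subset_univ]
    have hU : IsIdeal le (univ : Finset (Fin n)) := fun a _ b _ => Finset.mem_univ b
    rw [h0, hNC C univ hU]
    refine Finset.sum_congr ?_ fun _ _ => rfl
    ext M
    simp [Finset.subset_univ]
  -- grouping sums over equivalence classes
  have GRO : ∀ (s : Finset (Finset (Fin n))), (∀ L M, E L M → (L ∈ s ↔ M ∈ s)) →
      ∀ (g₁ g₂ : Finset (Fin n) → ℕ),
      (∀ M ∈ s, ∑ L ∈ univ.filter (fun L => E L M), g₁ L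
        = ∑ L ∈ univ.filter (fun L => E L M), g₂ L) →
      ∑ L ∈ s, g₁ L = ∑ L ∈ s, g₂ L := by
    intro s hs g₁ g₂ hg
    have hfib : ∀ (g : Finset (Fin n) → ℕ), ∑ L ∈ s, g L
        = ∑ c ∈ s.image (fun M => univ.filter (fun L => E L M)),
            ∑ L ∈ s.filter (fun L => univ.filter (fun L' => E L' L) = c), g L := by
      intro g
      rw [Finset.sum_fiberwise_of_maps_to (fun x hx => Finset.mem_image_of_mem _ hx)]
    rw [hfib g₁, hfib g₂]
    refine Finset.sum_congr rfl fun c hc => ?_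
    obtain ⟨M, hM, rfl⟩ := Finset.mem_image.mp hc
    have hcls : s.filter (fun L => univ.filter (fun L' => E L' L)
        = univ.filter (fun L' => E L' M)) = univ.filter (fun L => E L M) := by
      ext L
      simp only [Finset.mem_filter, Finset.mem_univ, true_and]
      constructor
      · rintro ⟨hLs, hLM⟩
        have hLL : L ∈ univ.filter (fun L' => E L' L) :=
          Finset.mem_filter.mpr ⟨Finset.mem_univ _, Erefl L⟩
        rw [hLM] at hLL
        exact (Finset.mem_filter.mp hLL).2
      · intro hLM
        refine ⟨(hs L M hLM).mpr hM, ?_⟩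
        ext L'
        simp only [Finset.mem_filter, Finset.mem_univ, true_and]
        exact ⟨fun h => Etrans h hLM, fun h => Etrans h (Esymm hLM)⟩
    rw [hcls]
    exact hg M hM
  -- the hypothesis, extended to all finsets
  have hyp' : ∀ I : Finset (Fin n),
      ∑ L ∈ univ.filter (fun L => E L I), gA le C₁ L
        = ∑ L ∈ univ.filter (fun L => E L I), gA le C₂ L := by
    intro I
    by_cases hI : IsIdeal le I
    · rw [← hAEeq, ← hAEeq]
      exact hband I hI
    · have hz : ∀ (C : Submodule F (Fin n → F)),
          ∑ L ∈ univ.filter (fun L => E L I), gA le C L = 0 := by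
        intro C
        refine Finset.sum_eq_zero fun L hL => ?_
        by_contra h
        have hE := (Finset.mem_filter.mp hL).2
        rw [hEdef] at hE
        obtain ⟨σ, hσ, rfl⟩ := hE
        exact hI (isIdeal_image (hH σ hσ) (hgAI C L h))
      rw [hz C₁, hz C₂]
  -- the two codes have the same cardinality
  have hcardC : Nat.card C₁ = Nat.card C₂ := by
    rw [hPlain C₁, hPlain C₂]
    exact GRO univ (fun _ _ _ => by simp) _ _ (fun M _ => hyp' M)
  -- class-constancy of the coefficients
  have dConst : ∀ (J' : Finset (Fin n)) {L M : Finset (Fin n)}, E L M →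
      coefD E J' L = coefD E J' M := by
    intro J' L M h
    rw [hEdef] at h
    obtain ⟨τ, hτ, rfl⟩ := h
    refine Finset.card_bij' (fun K _ => K.image τ) (fun K _ => K.image ↑τ⁻¹) ?_ ?_ ?_ ?_
    · intro K hK
      obtain ⟨hK1, hK2⟩ := Finset.mem_filter.mp hK
      refine Finset.mem_filter.mpr ⟨?_, Finset.image_subset_image hK2⟩
      exact Finset.mem_filter.mpr ⟨Finset.mem_univ _,
        Eact τ hτ (Finset.mem_filter.mp hK1).2⟩
    · intro K hK
      obtain ⟨hK1, hK2⟩ := Finset.mem_filter.mp hK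
      refine Finset.mem_filter.mpr ⟨?_, ?_⟩
      · exact Finset.mem_filter.mpr ⟨Finset.mem_univ _,
          Eact τ⁻¹ (H.inv_mem hτ) (Finset.mem_filter.mp hK1).2⟩
      · have := Finset.image_subset_image (f := ↑τ⁻¹) hK2
        rwa [image_image_inv] at this
    · intro K _
      exact image_image_inv τ K
    · intro K _
      have := image_image_inv τ⁻¹ K
      simpa using this
  have cConst : ∀ (J' : Finset (Fin n)) {L M : Finset (Fin n)}, E L M →
      coefC E J' L = coefC E J' M := by
    intro J' L M h
    rw [hEdef] at h
    obtain ⟨τ, hτ, rfl⟩ := h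
    refine Finset.card_bij' (fun K _ => K.image τ) (fun K _ => K.image ↑τ⁻¹) ?_ ?_ ?_ ?_
    · intro K hK
      obtain ⟨hK1, hK2⟩ := Finset.mem_filter.mp hK
      refine Finset.mem_filter.mpr ⟨?_, Finset.image_subset_image hK2⟩
      exact Finset.mem_filter.mpr ⟨Finset.mem_univ _,
        Eact τ hτ (Finset.mem_filter.mp hK1).2⟩
    · intro K hK
      obtain ⟨hK1, hK2⟩ := Finset.mem_filter.mp hK
      refine Finset.mem_filter.mpr ⟨?_, ?_⟩
      · exact Finset.mem_filter.mpr ⟨Finset.mem_univ _,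
          Eact τ⁻¹ (H.inv_mem hτ) (Finset.mem_filter.mp hK1).2⟩
      · have := Finset.image_subset_image (f := ↑τ⁻¹) hK2
        rwa [image_image_inv] at this
    · intro K _
      exact image_image_inv τ K
    · intro K _
      have := image_image_inv τ⁻¹ K
      simpa using this
  -- the central equation
  have EQN : ∀ J' : Finset (Fin n), IsIdeal le J' →
      ∑ L ∈ univ, coefC E J' L * gB le (dualCode C₁) L
        = ∑ L ∈ univ, coefC E J' L * gB le (dualCode C₂) L := by
    intro J' hJ'
    have hKideal : ∀ K ∈ univ.filter (fun K => E K J'), IsIdeal le K :=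
      fun K hK => Eideal (Finset.mem_filter.mp hK).2 hJ'
    have hstep : ∀ (C : Submodule F (Fin n → F)),
        (∑ L ∈ univ, coefC E J' L * gB le (dualCode C) L) * Nat.card C
          = (Fintype.card F) ^ (n - J'.card) * ∑ M ∈ univ, coefD E J' M * gA le C M := by
      intro C
      have hL : ∑ L ∈ univ, coefC E J' L * gB le (dualCode C) L
          = ∑ K ∈ univ.filter (fun K => E K J'),
              (univ.filter fun v : Fin n → F => v ∈ dualCode C ∧ supp v ⊆ Kᶜ).card := by
        calc ∑ L ∈ univ, coefC E J' L * gB le (dualCode C) L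
            = ∑ K ∈ univ.filter (fun K => E K J'),
                ∑ L ∈ univ.filter (fun L => K ⊆ L), gB le (dualCode C) L :=
              (swap_count (univ.filter (fun K => E K J')) (gB le (dualCode C))
                (fun L K => K ⊆ L)).symm
          _ = _ := Finset.sum_congr rfl fun K hK =>
              (hND (dualCode C) K (hKideal K hK)).symm
      rw [hL, Finset.sum_mul]
      have hterm : ∀ K ∈ univ.filter (fun K => E K J'),
          (univ.filter fun v : Fin n → F => v ∈ dualCode C ∧ supp v ⊆ Kᶜ).card * Nat.card C
            = (Fintype.card F) ^ (n - J'.card)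
              * ∑ M ∈ univ.filter (fun M => M ⊆ K), gA le C M := by
        intro K hK
        have h3 : Kᶜ.card = n - J'.card := by
          rw [Finset.card_compl, Fintype.card_fin, Ecard (Finset.mem_filter.mp hK).2]
        rw [key_card C K, h3, hNC C K (hKideal K hK)]
      rw [Finset.sum_congr rfl hterm, ← Finset.mul_sum]
      congr 1
      exact swap_count (univ.filter (fun K => E K J')) (gA le C) (fun M K => M ⊆ K)
    have hRHS : ∑ M ∈ univ, coefD E J' M * gA le C₁ M
        = ∑ M ∈ univ, coefD E J' M * gA le C₂ M := by
      refine GRO univ (fun _ _ _ => by simp) _ _ ?_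
      intro M _
      have hc : ∀ L ∈ univ.filter (fun L => E L M), coefD E J' L = coefD E J' M :=
        fun L hL => dConst J' (Finset.mem_filter.mp hL).2
      calc ∑ L ∈ univ.filter (fun L => E L M), coefD E J' L * gA le C₁ L
          = coefD E J' M * ∑ L ∈ univ.filter (fun L => E L M), gA le C₁ L := by
            rw [Finset.mul_sum]
            exact Finset.sum_congr rfl fun L hL => by rw [hc L hL]
        _ = coefD E J' M * ∑ L ∈ univ.filter (fun L => E L M), gA le C₂ L := by
            rw [hyp' M]
        _ = ∑ L ∈ univ.filter (fun L => E L M), coefD E J' L * gA le C₂ L := by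
            rw [Finset.mul_sum]
            exact Finset.sum_congr rfl fun L hL => by rw [hc L hL]
    have h1 := hstep C₁
    have h2 := hstep C₂
    rw [hRHS, ← h2, hcardC] at h1
    haveI : Nonempty C₂ := ⟨0⟩
    exact Nat.eq_of_mul_eq_mul_right Nat.card_pos h1
  -- vanishing of class sums at non-ideals
  have hS0 : ∀ (D : Submodule F (Fin n → F)) (J' : Finset (Fin n)), ¬ IsIdeal le J' →
      ∑ L ∈ univ.filter (fun L => E L J'), gB le D L = 0 := by
    intro D J' hJ'
    refine Finset.sum_eq_zero fun L hL => ?_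
    by_contra h
    have hE := (Finset.mem_filter.mp hL).2
    rw [hEdef] at hE
    obtain ⟨σ, hσ, rfl⟩ := hE
    exact hJ' (isIdeal_image (hH σ hσ) (hgBI D L h))
  -- downward induction on the size of the ideal
  have MAIN : ∀ (k : ℕ) (J' : Finset (Fin n)), n - J'.card = k →
      ∑ L ∈ univ.filter (fun L => E L J'), gB le (dualCode C₁) L
        = ∑ L ∈ univ.filter (fun L => E L J'), gB le (dualCode C₂) L := by
    intro k
    induction k using Nat.strong_induction_on with
    | _ k IH =>
      intro J' hk
      by_cases hJ' : IsIdeal le J'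
      · have eqn := EQN J' hJ'
        rw [← Finset.sum_filter_add_sum_filter_not univ (fun L => E L J')
            (fun L => coefC E J' L * gB le (dualCode C₁) L),
          ← Finset.sum_filter_add_sum_filter_not univ (fun L => E L J')
            (fun L => coefC E J' L * gB le (dualCode C₂) L)] at eqn
        have hfirst : ∀ (D : Submodule F (Fin n → F)),
            ∑ L ∈ univ.filter (fun L => E L J'), coefC E J' L * gB le D L
              = coefC E J' J' * ∑ L ∈ univ.filter (fun L => E L J'), gB le D L := by
          intro D
          rw [Finset.mul_sum]
          exact Finset.sum_congr rfl fun L hL => by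
            rw [cConst J' (Finset.mem_filter.mp hL).2]
        have hrest : ∑ L ∈ univ.filter (fun L => ¬ E L J'),
            coefC E J' L * gB le (dualCode C₁) L
              = ∑ L ∈ univ.filter (fun L => ¬ E L J'),
                  coefC E J' L * gB le (dualCode C₂) L := by
          refine GRO (univ.filter (fun L => ¬ E L J')) ?_ _ _ ?_
          · intro L M hLM
            simp only [Finset.mem_filter, Finset.mem_univ, true_and]
            exact ⟨fun h hM => h (Etrans hLM hM), fun h hL => h (Etrans (Esymm hLM) hL)⟩
          · intro M hM
            have hMnE : ¬ E M J' := by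
              have := (Finset.mem_filter.mp hM).2
              simpa using this
            have hc : ∀ L ∈ univ.filter (fun L => E L M), coefC E J' L = coefC E J' M :=
              fun L hL => cConst J' (Finset.mem_filter.mp hL).2
            rcases Nat.eq_zero_or_pos (coefC E J' M) with h0 | hpos
            · have hz : ∀ (D : Submodule F (Fin n → F)),
                  ∑ L ∈ univ.filter (fun L => E L M), coefC E J' L * gB le D L = 0 :=
                fun D => Finset.sum_eq_zero fun L hL => by rw [hc L hL, h0, zero_mul]
              rw [hz, hz]
            · obtain ⟨K, hK⟩ := Finset.card_pos.mp hpos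
              obtain ⟨hK1, hK2⟩ := Finset.mem_filter.mp hK
              have hKE : E K J' := (Finset.mem_filter.mp hK1).2
              by_cases hMI : IsIdeal le M
              · have hKM : K ≠ M := fun h => hMnE (h ▸ hKE)
                have hlt : J'.card < M.card := by
                  have h4 := Finset.card_lt_card (Finset.ssubset_iff_subset_ne.mpr ⟨hK2, hKM⟩)
                  have h5 := Ecard hKE
                  omega
                have hMn : M.card ≤ n := by
                  simpa [Finset.card_univ] using Finset.card_le_univ M
                have hIH := IH (n - M.card) (by omega) M rfl
                calc ∑ L ∈ univ.filter (fun L => E L M), coefC E J' L * gB le (dualCode C₁) L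
                    = coefC E J' M * ∑ L ∈ univ.filter (fun L => E L M),
                        gB le (dualCode C₁) L := by
                      rw [Finset.mul_sum]
                      exact Finset.sum_congr rfl fun L hL => by rw [hc L hL]
                  _ = coefC E J' M * ∑ L ∈ univ.filter (fun L => E L M),
                        gB le (dualCode C₂) L := by rw [hIH]
                  _ = ∑ L ∈ univ.filter (fun L => E L M),
                        coefC E J' L * gB le (dualCode C₂) L := by
                      rw [Finset.mul_sum]
                      exact Finset.sum_congr rfl fun L hL => by rw [hc L hL]
              · have hz : ∀ (D : Submodule F (Fin n → F)),
                    ∑ L ∈ univ.filter (fun L => E L M), coefC E J' L * gB le D L = 0 := by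
                  intro D
                  refine Finset.sum_eq_zero fun L hL => ?_
                  have hLE : E L M := (Finset.mem_filter.mp hL).2
                  by_cases hg : gB le D L = 0
                  · rw [hg, mul_zero]
                  · refine absurd ?_ hMI
                    rw [hEdef] at hLE
                    obtain ⟨σ, hσ, rfl⟩ := hLE
                    exact isIdeal_image (hH σ hσ) (hgBI D L hg)
                rw [hz, hz]
        rw [hfirst, hfirst, hrest] at eqn
        have hpos : 0 < coefC E J' J' :=
          Finset.card_pos.mpr ⟨J', Finset.mem_filter.mpr
            ⟨Finset.mem_filter.mpr ⟨Finset.mem_univ _, Erefl J'⟩, Finset.Subset.refl J'⟩⟩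
        exact Nat.eq_of_mul_eq_mul_left hpos (Nat.add_right_cancel eqn)
      · rw [hS0 (dualCode C₁) J' hJ', hS0 (dualCode C₂) J' hJ']
  rw [hAEDeq, hAEDeq]
  exact MAIN (n - J.card) J rfl

end
end
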